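/- For every input pair (x, y) ∈ Fin 3 × Fin 3, the number of pairs (a, b) ∈ V_A × V_B with a y = b x equals 8, out of the 16 pairs in V_A × V_B. Consequently, under unstructured noise—outputs a and b drawn independently and uniformly from V_A and V_B—each of the nine terms of the Magic Square Bell expression equals 1/2, so the expression takes the value I_noise = 9/2, and the resistance to noise of the Magic Square inequality is p_n = (9 − 8)/(9 − 9/2) = 2/9. -/
import Mathlib


/-- Alice's admissible outputs for the Magic Square game: triples of bits with
even parity. -/
def MagicVA : Type := {a : Fin 3 → ZMod 2 // a 0 + a 1 + a 2 = 0}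

/-- Bob's admissible outputs for the Magic Square game: triples of bits with
odd parity. -/
def MagicVB : Type := {b : Fin 3 → ZMod 2 // b 0 + b 1 + b 2 = 1}

instance : Fintype MagicVA := by unfold MagicVA; infer_instance
instance : Fintype MagicVB := by unfold MagicVB; infer_instance

/-- **Resistance to noise of the Magic Square inequality.**
For every input pair `(x, y)`, exactly 8 of the 16 output pairs
`(a, b) ∈ V_A × V_B` satisfy the winning condition `a y = b x`.  Consequently
each of the nine terms of the Bell expression equals `1/2` under unstructured
noise, the noise value of the Bell expression is `I_noise = 9/2`, and the
resistance to noise is `p_n = (9 − 8)/(9 − 9/2) = 2/9`. -/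
theorem magic_square_noise :
    (∀ x y : Fin 3,
      (Finset.univ.filter
        (fun q : MagicVA × MagicVB => q.1.val y = q.2.val x)).card = 8) ∧
    Fintype.card (MagicVA × MagicVB) = 16 ∧
    (∑ x : Fin 3, ∑ y : Fin 3,
      ((Finset.univ.filter
        (fun q : MagicVA × MagicVB => q.1.val y = q.2.val x)).card : ℝ) / 16 = 9 / 2) ∧
    ((9 : ℝ) - 8) / (9 - 9 / 2) = 2 / 9 := by
  have h : ∀ x y : Fin 3,
      (Finset.univ.filter
        (fun q : MagicVA × MagicVB => q.1.val y = q.2.val x)).card = 8 := by decide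
  refine ⟨h, by decide, ?_, by norm_num⟩
  simp only [h]
  norm_num [Fin.sum_univ_three]
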